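/- Let α > 0, β > 1 and γ > 0 satisfy 1 < γ·(β−1) < β+1. Then the kinetic system admits no nonconstant periodic solution with positive components: there is no nonconstant pair of differentiable periodic functions (U,V) : ℝ → ℝ² solving the kinetic system on ℝ with U(t) > 0 and V(t) > 0 for all t ∈ ℝ. -/

import Mathlib

/-- Rosenzweig–MacArthur kinetic system: if `1 < γ(β-1) < β+1`, the system admits
no nonconstant periodic solution with positive components. -/
theorem no_periodic_orbit (α β γ : ℝ)
    (hα : 0 < α) (hβ : 1 < β) (hγ : 0 < γ)
    (h1 : 1 < γ * (β - 1)) (h2 : γ * (β - 1) < β + 1) :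
    ¬ ∃ (U V : ℝ → ℝ) (T : ℝ), 0 < T ∧
      (∀ t : ℝ, HasDerivAt U (α * U t * (γ - U t) - U t * V t / (1 + U t)) t ∧
        HasDerivAt V (-(V t) + β * U t * V t / (1 + U t)) t) ∧
      (∀ t : ℝ, 0 < U t ∧ 0 < V t) ∧
      (∀ t : ℝ, U (t + T) = U t ∧ V (t + T) = V t) ∧
      (∃ t₁ t₂ : ℝ, (U t₁, V t₁) ≠ (U t₂, V t₂)) := by
  rintro ⟨U, V, T, hT, hode, hpos, hper, t₁, t₂, hne⟩
  obtain ⟨b, hbdef⟩ : ∃ b : ℝ, b = β - 1 := ⟨_, rfl⟩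
  have hb0 : (0:ℝ) < b := by rw [hbdef]; linarith
  have hβeq : β = b + 1 := by rw [hbdef]; ring
  obtain ⟨θ, hθdef⟩ : ∃ θ : ℝ, θ = 2*α/b^2 := ⟨_, rfl⟩
  have hθ0 : 0 < θ := by rw [hθdef]; positivity
  obtain ⟨xs, hxsdef⟩ : ∃ x : ℝ, x = 1/b := ⟨_, rfl⟩
  have hxs0 : 0 < xs := by rw [hxsdef]; positivity
  have hγb : (γ - 1) * b < 2 := by nlinarith
  obtain ⟨k, hkdef⟩ : ∃ k : ℝ,
      k = -((θ+1)*α*(γ-xs)*(1+xs))/θ - (θ+1)*(b*xs - Real.log xs) := ⟨_, rfl⟩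
  obtain ⟨W, hWdef⟩ : ∃ W : ℝ → ℝ,
      W = fun x => θ * ((θ+1)*(b*x - Real.log x) + k) + ((θ+1)*α)*((γ-x)*(1+x)) := ⟨_, rfl⟩
  have hWxs : W xs = 0 := by
    rw [hWdef, hkdef]
    field_simp
    ring
  -- derivative of W
  have hWd : ∀ x : ℝ, 0 < x →
      HasDerivAt W (θ*((θ+1)*(b - 1/x)) + ((θ+1)*α)*(γ-1-2*x)) x := by
    intro x hx
    rw [hWdef]
    have h1d : HasDerivAt (fun y : ℝ => b*y - Real.log y) (b - 1/x) x := by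
      have := ((hasDerivAt_id' x).const_mul b).sub (Real.hasDerivAt_log hx.ne')
      exact this.congr_deriv (by ring)
    have h2d : HasDerivAt (fun y : ℝ => (γ-y)*(1+y)) (γ-1-2*x) x := by
      have := ((hasDerivAt_const x γ).sub (hasDerivAt_id' x)).mul
        ((hasDerivAt_const x 1).add (hasDerivAt_id' x))
      exact this.congr_deriv (by simp only [Pi.add_apply, Pi.sub_apply]; ring)
    have := (((h1d.const_mul (θ+1)).add_const k).const_mul θ).add (h2d.const_mul ((θ+1)*α))
    exact this.congr_deriv (by ring)
  have hWd_neg : ∀ x : ℝ, 0 < x → θ*((θ+1)*(b - 1/x)) + ((θ+1)*α)*(γ-1-2*x) < 0 := by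
    intro x hx
    have he : θ*((θ+1)*(b - 1/x)) + ((θ+1)*α)*(γ-1-2*x)
        = (θ+1) * ((2*α*(b*x-1) + b^2*x*(α*(γ-1-2*x)))/(b^2*x)) := by
      rw [hθdef]; field_simp
    rw [he]
    apply mul_neg_of_pos_of_neg (by positivity)
    apply div_neg_of_neg_of_pos _ (by positivity)
    nlinarith [sq_nonneg (b*x-1), mul_pos (mul_pos hα hb0) hx]
  have hWanti : StrictAntiOn W (Set.Ioi (0:ℝ)) := by
    apply strictAntiOn_of_deriv_neg (convex_Ioi 0)
    · intro x hx
      exact (hWd x hx).differentiableAt.continuousAt.continuousWithinAt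
    · intro x hx
      rw [interior_Ioi] at hx
      rw [(hWd x hx).deriv]
      exact hWd_neg x hx
  have hsign : ∀ x : ℝ, 0 < x → x ≠ xs → (x - xs) * W x < 0 := by
    intro x hx hxne
    rcases lt_or_gt_of_ne hxne with h | h
    · have hw : 0 < W x := by
        have := hWanti (Set.mem_Ioi.2 hx) (Set.mem_Ioi.2 hxs0) h
        rw [hWxs] at this; linarith
      exact mul_neg_of_neg_of_pos (by linarith) hw
    · have hw : W x < 0 := by
        have := hWanti (Set.mem_Ioi.2 hxs0) (Set.mem_Ioi.2 hx) h
        rw [hWxs] at this; linarith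
      exact mul_neg_of_pos_of_neg (by linarith) hw
  -- Lyapunov function
  obtain ⟨L, hLdef⟩ : ∃ L : ℝ → ℝ,
      L = fun t => (V t)^θ * ((θ+1)*(b*U t - Real.log (U t)) + k + V t) := ⟨_, rfl⟩
  obtain ⟨D, hDdef⟩ : ∃ D : ℝ → ℝ,
      D = fun t => (V t)^θ * (b*(U t - xs) * W (U t) / (1+U t)) := ⟨_, rfl⟩
  have hLD : ∀ t, HasDerivAt L (D t) t := by
    intro t
    obtain ⟨hU, hV⟩ := hode t
    obtain ⟨hu, hv⟩ := hpos t
    have h1u : (0:ℝ) < 1 + U t := by linarith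
    rw [hLdef]
    have hVθ : HasDerivAt (fun s => (V s)^θ)
        ((-(V t) + β * U t * V t / (1 + U t)) * θ * (V t)^(θ-1)) t :=
      hV.rpow_const (Or.inl hv.ne')
    have hin : HasDerivAt (fun s => (θ+1)*(b*U s - Real.log (U s)) + k + V s)
        ((θ+1)*(b*(α * U t * (γ - U t) - U t * V t / (1 + U t))
          - (α * U t * (γ - U t) - U t * V t / (1 + U t))/U t) + (-(V t) + β * U t * V t / (1 + U t))) t :=
      ((((hU.const_mul b).sub (hU.log hu.ne')).const_mul (θ+1)).add_const k).add hV
    have hmul := hVθ.mul hin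
    refine hmul.congr_deriv ?_
    rw [hDdef, hWdef]
    simp only
    rw [Real.rpow_sub_one hv.ne']
    rw [hβeq, hxsdef]
    field_simp
    ring
  have hD_nonpos : ∀ t, D t ≤ 0 := by
    intro t
    obtain ⟨hu, hv⟩ := hpos t
    have h1u : (0:ℝ) < 1 + U t := by linarith
    have hvθ : (0:ℝ) < (V t)^θ := Real.rpow_pos_of_pos hv θ
    rw [hDdef]
    simp only
    rcases eq_or_ne (U t) xs with h | h
    · simp [h]
    · have := hsign (U t) hu h
      have hfrac : b*(U t - xs) * W (U t) / (1+U t) ≤ 0 := by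
        apply div_nonpos_of_nonpos_of_nonneg _ h1u.le
        nlinarith
      exact mul_nonpos_of_nonneg_of_nonpos hvθ.le hfrac
  have hanti : Antitone L :=
    antitone_of_deriv_nonpos (fun t => (hLD t).differentiableAt)
      (fun t => by rw [(hLD t).deriv]; exact hD_nonpos t)
  have hLper : ∀ t, L (t + T) = L t := by
    intro t
    rw [hLdef]
    simp only [(hper t).1, (hper t).2]
  have hstep : ∀ (n : ℕ) (t : ℝ), L (t + n*T) = L t := by
    intro n
    induction n with
    | zero => simp
    | succ m ih =>
        intro t
        have heq : t + ((m:ℝ)+1)*T = (t + m*T) + T := by ring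
        push_cast
        rw [heq, hLper, ih]
  have hconst : ∀ t, L t = L 0 := by
    have hnn : ∀ t : ℝ, 0 ≤ t → L t = L 0 := by
      intro t ht
      obtain ⟨n, hn⟩ := exists_nat_ge (t / T)
      have htn : t ≤ n*T := by
        rw [div_le_iff₀ hT] at hn; linarith
      refine le_antisymm (hanti ht) ?_
      have hle : L (n*T) ≤ L t := hanti htn
      have heq0 : L ((0:ℝ) + n*T) = L 0 := hstep n 0
      rw [zero_add] at heq0
      linarith
    intro t
    obtain ⟨n, hn⟩ := exists_nat_ge ((-t) / T)
    have h0 : 0 ≤ t + n*T := by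
      rw [div_le_iff₀ hT] at hn; linarith
    calc L t = L (t + n*T) := (hstep n t).symm
    _ = L 0 := hnn _ h0
  have hLfun : L = fun _ => L 0 := funext hconst
  have hD0 : ∀ t, D t = 0 := by
    intro t
    have h := hLD t
    rw [hLfun] at h
    exact h.unique (hasDerivAt_const t (L 0))
  have hUxs : ∀ t, U t = xs := by
    intro t
    obtain ⟨hu, hv⟩ := hpos t
    have h1u : (0:ℝ) < 1 + U t := by linarith
    have hvθ : (0:ℝ) < (V t)^θ := Real.rpow_pos_of_pos hv θ
    by_contra h
    have hs := hsign (U t) hu h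
    have hd := hD0 t
    rw [hDdef] at hd
    simp only at hd
    have hfrac : b*(U t - xs) * W (U t) / (1+U t) = 0 := by
      rcases mul_eq_zero.1 hd with h' | h'
      · exact absurd h' hvθ.ne'
      · exact h'
    have hnum : b*(U t - xs) * W (U t) = 0 := by
      rcases div_eq_zero_iff.1 hfrac with h' | h'
      · exact h'
      · exact absurd h' h1u.ne'
    have : b * ((U t - xs) * W (U t)) < 0 := mul_neg_of_pos_of_neg hb0 hs
    nlinarith
  have hVconst : ∀ t, V t = α*(γ-xs)*(1+xs) := by
    intro t
    obtain ⟨hU, _⟩ := hode t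
    obtain ⟨hu, hv⟩ := hpos t
    have hUfun : U = fun _ => xs := funext hUxs
    have h0 : HasDerivAt U 0 t := by
      rw [hUfun]; exact hasDerivAt_const t xs
    have hz := hU.unique h0
    rw [hUxs t] at hz
    have h1xs : (0:ℝ) < 1 + xs := by linarith
    -- hz : α * xs * (γ - xs) - xs * V t / (1 + xs) = 0
    have hq : xs * V t = α * xs * (γ - xs) * (1 + xs) := by
      rw [eq_comm, ← sub_eq_zero]
      field_simp at hz ⊢
      linarith
    have hq2 : xs * V t = xs * (α*(γ-xs)*(1+xs)) := by linarith [hq]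
    exact mul_left_cancel₀ hxs0.ne' hq2
  apply hne
  rw [hUxs t₁, hUxs t₂, hVconst t₁, hVconst t₂]
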